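/- Let T be a set, let X ⊆ ℝ^T be an S-open subset that is also a linear subspace of ℝ^T (with pointwise vector operations), and let T' be a topology on X making X a topological vector space over ℝ. Then T' is coordinated with the family of Euclidean topologies on the factors ℝ, i.e. for every t ∈ T and every a ∈ X one has lim_{x→a_t} a_t^x = a in (X, T'), where the limit x → a_t is taken in ℝ with the Euclidean topology. -/

import Mathlib

open Function Filter Topology

/-- `Sigma1 x` (σ₁(x)): the set of points differing from `x` in at most one coordinate. -/
def Sigma1 {T : Type*} {X : T → Type*} (x : ∀ t, X t) : Set (∀ t, X t) :=
  {y | {t | y t ≠ x t}.Subsingleton}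

/-- A set `A` is `S`-open if `σ₁(x) ⊆ A` for every `x ∈ A`. -/
def SOpen {T : Type*} {X : T → Type*} (A : Set (∀ t, X t)) : Prop :=
  ∀ x ∈ A, Sigma1 x ⊆ A

theorem update_mem {T : Type*} [DecidableEq T] {X : T → Type*} {A : Set (∀ t, X t)}
    (hA : SOpen A) {x : ∀ t, X t} (hx : x ∈ A) (t : T) (v : X t) :
    Function.update x t v ∈ A := by
  apply hA x hx
  intro s hs s' hs'
  simp only [Set.mem_setOf_eq] at hs hs'
  have h1 : s = t := by
    by_contra h
    exact hs (Function.update_of_ne h v x)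
  have h2 : s' = t := by
    by_contra h
    exact hs' (Function.update_of_ne h v x)
  rw [h1, h2]

/-- The point `x_t^v`: `x` with its `t`-th coordinate replaced by `v`, as an element
of the `S`-open set `A`. -/
def updPt {T : Type*} [DecidableEq T] {X : T → Type*} {A : Set (∀ t, X t)}
    (hA : SOpen A) (x : ↥A) (t : T) (v : X t) : ↥A :=
  ⟨Function.update x.1 t v, update_mem hA x.2 t v⟩

/-- A topology `T'` on `A` is coordinated with the family of factor topologies:
for every `t` and `a ∈ A`, `lim_{v → a t} a_t^v = a` in `(A, T')`. -/
def Coordinated {T : Type*} [DecidableEq T] {X : T → Type*} [∀ t, TopologicalSpace (X t)]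
    {A : Set (∀ t, X t)} (hA : SOpen A) (T' : TopologicalSpace ↥A) : Prop :=
  ∀ (t : T) (a : ↥A), Filter.Tendsto (fun v : X t => updPt hA a t v)
    (nhds (a.1 t)) (@nhds _ T' a)

/-- If `p` is a linear subspace of `ℝ^T` that is S-open and `T'` is a topology making
`p` a topological vector space over `ℝ`, then `T'` is coordinated with the Euclidean
topologies on the factors. -/
theorem tvs_coordinated {T : Type*} [DecidableEq T] (p : Submodule ℝ (T → ℝ))
    (hA : SOpen (p : Set (T → ℝ))) (T' : TopologicalSpace ↥p)
    (h1 : @IsTopologicalAddGroup ↥p T' _) (h2 : @ContinuousSMul ℝ ↥p _ _ T') :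
    Coordinated hA T' := by
  letI := T'
  haveI := h1
  haveI := h2
  intro t a
  have he : Function.update (0 : T → ℝ) t 1 ∈ p := update_mem hA p.zero_mem t 1
  set e : ↥p := ⟨Function.update 0 t 1, he⟩ with he'
  have key : ∀ v : ℝ, updPt hA a t v = a + (v - a.1 t) • e := by
    intro v
    apply Subtype.ext
    funext s
    simp only [updPt, he', Submodule.coe_add, SetLike.val_smul, Pi.add_apply, Pi.smul_apply]
    by_cases hs : s = t
    · subst hs; simp
    · simp [Function.update_of_ne hs]
  simp only [key]
  have h0 : Filter.Tendsto (fun v : ℝ => v - a.1 t) (nhds (a.1 t)) (nhds 0) := by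
    have : Filter.Tendsto (fun v : ℝ => v - a.1 t) (nhds (a.1 t)) (nhds (a.1 t - a.1 t)) :=
      Filter.Tendsto.sub (continuous_id.tendsto _) tendsto_const_nhds
    simpa using this
  have := (h0.smul (tendsto_const_nhds : Filter.Tendsto (fun _ : ℝ => e) _ (nhds e)))
  have h3 := (tendsto_const_nhds : Filter.Tendsto (fun _ : ℝ => a) (nhds (a.1 t)) (nhds a)).add this
  simpa using h3
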